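/- For any nonzero integer n and A ∈ ℂ with A² = i: the conductance of the vertical classical tangle 1/[n⁰], defined as i·f/(g) where f = A^{-n}, g = A^{-n+2σ(n)} Σ_{k=0}^{|n|-1} (-A^{4σ(n)})^k, equals 1/n. -/

import Mathlib

open Complex in
/-- The conductance of the vertical classical tangle `1/[n⁰]` equals `1/n`:
with `A² = i`, `f = A^(-n)`, `g = A^(-n+2σ) ∑_{k=0}^{|n|-1} (-A^(4σ))^k`,
we have `i * f / g = 1/n`. -/
theorem conductance_vertical_classical (A : ℂ) (hA : A ^ 2 = I) (n : ℤ) (hn : n ≠ 0) :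
    I * (A ^ (-n)) /
      (A ^ (-n + 2 * n.sign) * ∑ k ∈ Finset.range n.natAbs, (-A ^ (4 * n.sign)) ^ k) =
      1 / (n : ℂ) := by
  have hA0 : A ≠ 0 := by
    intro h
    rw [h] at hA
    simp at hA
    exact I_ne_zero hA.symm
  have h4 : A ^ (4:ℤ) = -1 := by
    have : A ^ (4:ℕ) = -1 := by
      calc A ^ (4:ℕ) = (A ^ 2) ^ 2 := by ring
        _ = I ^ 2 := by rw [hA]
        _ = -1 := I_sq
    rw [← zpow_natCast] at this
    exact_mod_cast this
  have h2 : A ^ (2:ℤ) = I := by rw [← hA, zpow_two, sq]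
  rcases hn.lt_or_gt with hneg | hpos
  · have hs : n.sign = -1 := Int.sign_eq_neg_one_of_neg hneg
    rw [hs]
    have hm4 : A ^ (4 * (-1:ℤ)) = -1 := by
      rw [show (4 * (-1:ℤ)) = -4 by norm_num, zpow_neg, h4]
      norm_num
    rw [hm4]
    simp only [neg_neg, one_pow, Finset.sum_const, Finset.card_range, nsmul_eq_mul, mul_one]
    have hcast : (n.natAbs : ℂ) = -(n : ℂ) := by
      have h : (n.natAbs : ℤ) = -n := by omega
      calc (n.natAbs : ℂ) = ((n.natAbs : ℤ) : ℂ) := (Int.cast_natCast _).symm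
        _ = ((-n : ℤ) : ℂ) := by rw [h]
        _ = -(n : ℂ) := by push_cast; ring
    rw [hcast]
    have hA2 : A ^ (-2:ℤ) = -I := by
      rw [show (-2:ℤ) = -(2:ℤ) by ring, zpow_neg, h2, inv_I]
    rw [show (-n + 2 * (-1:ℤ)) = -n + (-2) by ring, zpow_add₀ hA0, hA2]
    have hn0 : (n : ℂ) ≠ 0 := Int.cast_ne_zero.mpr hn
    have hAn : A ^ (-n) ≠ 0 := zpow_ne_zero _ hA0
    field_simp
  · have hs : n.sign = 1 := Int.sign_eq_one_of_pos hpos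
    rw [hs]
    have hm4 : A ^ (4 * (1:ℤ)) = -1 := by rw [mul_one, h4]
    rw [hm4]
    simp only [neg_neg, one_pow, Finset.sum_const, Finset.card_range, nsmul_eq_mul, mul_one]
    have hcast : (n.natAbs : ℂ) = (n : ℂ) := by
      have h : (n.natAbs : ℤ) = n := by omega
      calc (n.natAbs : ℂ) = ((n.natAbs : ℤ) : ℂ) := (Int.cast_natCast _).symm
        _ = ((n : ℤ) : ℂ) := by rw [h]
        _ = (n : ℂ) := rfl
    rw [hcast]
    rw [zpow_add₀ hA0, h2]
    have hn0 : (n : ℂ) ≠ 0 := Int.cast_ne_zero.mpr hn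
    have hAn : A ^ (-n) ≠ 0 := zpow_ne_zero _ hA0
    field_simp
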